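/- Let ψ : [0,1] → ℝ be twice continuously differentiable with ψ(0) = ψ(1) = 0 and satisfying ψ'(x) + (σ − θν₁/(1−x) + θν₀/x)ψ(x) = −σ(x − x̃) on (0,1), with ψ' continuous at 1. Then −ψ'(1)(1 + θν₁) = σ(1 − x̃); equivalently, the coefficient a₁ := −ψ'(1) equals σ(1−x̃)/(1+θν₁). -/

import Mathlib

open Filter Topology Set

/-- The initial coefficient `a₁ = -ψ'(1)` satisfies
`-ψ'(1)(1 + θν₁) = σ(1 - x̃)`, obtained from the limit `x → 1` of the
first-order ODE `ψ' + (σ - θν₁/(1-x) + θν₀/x)ψ = -σ(x - x̃)`. -/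
theorem stmt16 (θ σ ν0 ν1 xt : ℝ) (hθ : 0 < θ) (hσ : 0 ≤ σ)
    (hν0 : ν0 ∈ Set.Ioo (0:ℝ) 1) (hν1 : ν1 ∈ Set.Ioo (0:ℝ) 1) (hνsum : ν0 + ν1 = 1)
    (ψ : ℝ → ℝ)
    (hC2 : ContDiffOn ℝ 2 ψ (Set.Icc 0 1))
    (hψ0 : ψ 0 = 0) (hψ1 : ψ 1 = 0)
    (hODE : ∀ x ∈ Set.Ioo (0:ℝ) 1,
      deriv ψ x + (σ - θ * ν1 / (1-x) + θ * ν0 / x) * ψ x = -(σ * (x - xt)))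
    (hcont : ContinuousWithinAt (deriv ψ) (Set.Icc 0 1) 1) :
    -deriv ψ 1 * (1 + θ * ν1) = σ * (1 - xt) := by
  set s : Set ℝ := Set.Icc (0:ℝ) 1 with hs
  have h1s : (1:ℝ) ∈ s := by simp [hs]
  have huniq : UniqueDiffOn ℝ s := uniqueDiffOn_Icc one_pos
  have hd1 : DifferentiableOn ℝ ψ s := hC2.differentiableOn two_ne_zero
  have hne : (𝓝[Set.Ioo (0:ℝ) 1] (1:ℝ)).NeBot := by
    apply mem_closure_iff_nhdsWithin_neBot.mp
    rw [closure_Ioo (by norm_num : (0:ℝ) ≠ 1)]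
    exact ⟨by norm_num, le_refl 1⟩
  have hsub : Set.Ioo (0:ℝ) 1 ⊆ s := Set.Ioo_subset_Icc_self
  have hmono : 𝓝[Set.Ioo (0:ℝ) 1] (1:ℝ) ≤ 𝓝[s] 1 := nhdsWithin_mono _ hsub
  -- derivWithin = deriv on Ioo
  have heqIoo : ∀ x ∈ Set.Ioo (0:ℝ) 1, derivWithin ψ s x = deriv ψ x := fun x hx =>
    derivWithin_of_mem_nhds (Icc_mem_nhds hx.1 hx.2)
  -- derivWithin continuous on s
  have hcd : ContinuousOn (derivWithin ψ s) s :=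
    hC2.continuousOn_derivWithin huniq one_le_two
  have h2 : Tendsto (derivWithin ψ s) (𝓝[Set.Ioo (0:ℝ) 1] 1) (𝓝 (derivWithin ψ s 1)) :=
    ((hcd 1 h1s).tendsto).mono_left hmono
  have h1 : Tendsto (deriv ψ) (𝓝[Set.Ioo (0:ℝ) 1] 1) (𝓝 (deriv ψ 1)) :=
    hcont.tendsto.mono_left hmono
  have heqev : derivWithin ψ s =ᶠ[𝓝[Set.Ioo (0:ℝ) 1] 1] deriv ψ :=
    eventually_nhdsWithin_of_forall heqIoo
  have hdd : derivWithin ψ s 1 = deriv ψ 1 :=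
    tendsto_nhds_unique (h2.congr' heqev) h1
  -- slope tendsto
  have hdw : HasDerivWithinAt ψ (deriv ψ 1) s 1 := by
    rw [← hdd]; exact (hd1 1 h1s).hasDerivWithinAt
  have hslope : Tendsto (slope ψ 1) (𝓝[s \ {1}] 1) (𝓝 (deriv ψ 1)) :=
    hasDerivWithinAt_iff_tendsto_slope.mp hdw
  have hsub2 : Set.Ioo (0:ℝ) 1 ⊆ s \ {1} := fun x hx =>
    ⟨hsub hx, by simp [ne_of_lt hx.2]⟩
  have hslope' : Tendsto (fun x => ψ x / (1 - x)) (𝓝[Set.Ioo (0:ℝ) 1] 1)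
      (𝓝 (-(deriv ψ 1))) := by
    have : Tendsto (fun x => -(slope ψ 1 x)) (𝓝[Set.Ioo (0:ℝ) 1] 1) (𝓝 (-(deriv ψ 1))) :=
      (hslope.mono_left (nhdsWithin_mono _ hsub2)).neg
    refine this.congr' (eventually_nhdsWithin_of_forall fun x hx => ?_)
    have hx1 : x - 1 ≠ 0 := sub_ne_zero.mpr (ne_of_lt hx.2)
    have h1x : (1:ℝ) - x ≠ 0 := sub_ne_zero.mpr (ne_of_gt hx.2)
    have hs1 : slope ψ 1 x = ψ x / (x - 1) := by
      rw [slope_def_field, hψ1, sub_zero]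
    rw [hs1]
    field_simp
    ring
  -- ψ tends to 0
  have hψt : Tendsto ψ (𝓝[Set.Ioo (0:ℝ) 1] 1) (𝓝 0) := by
    have := (hC2.continuousOn 1 h1s).tendsto.mono_left hmono
    rwa [hψ1] at this
  have hψx : Tendsto (fun x => ψ x / x) (𝓝[Set.Ioo (0:ℝ) 1] 1) (𝓝 0) := by
    have hx : Tendsto (fun x : ℝ => x) (𝓝[Set.Ioo (0:ℝ) 1] 1) (𝓝 1) :=
      tendsto_id.mono_left nhdsWithin_le_nhds
    have := hψt.div hx one_ne_zero
    rw [zero_div] at this; exact this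
  -- main limit
  have hFlim : Tendsto (fun x => deriv ψ x + σ * ψ x - θ * ν1 * (ψ x / (1 - x))
      + θ * ν0 * (ψ x / x)) (𝓝[Set.Ioo (0:ℝ) 1] 1)
      (𝓝 (deriv ψ 1 + σ * 0 - θ * ν1 * (-(deriv ψ 1)) + θ * ν0 * 0)) :=
    (((h1.add (hψt.const_mul σ)).sub (hslope'.const_mul (θ * ν1))).add
      (hψx.const_mul (θ * ν0)))
  have hGlim : Tendsto (fun x : ℝ => -(σ * (x - xt))) (𝓝[Set.Ioo (0:ℝ) 1] 1)
      (𝓝 (-(σ * (1 - xt)))) := by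
    apply Tendsto.mono_left _ nhdsWithin_le_nhds
    exact (Continuous.tendsto (by continuity) 1)
  have heqF : (fun x => deriv ψ x + σ * ψ x - θ * ν1 * (ψ x / (1 - x))
      + θ * ν0 * (ψ x / x)) =ᶠ[𝓝[Set.Ioo (0:ℝ) 1] 1] (fun x => -(σ * (x - xt))) := by
    refine eventually_nhdsWithin_of_forall fun x hx => ?_
    have h := hODE x hx
    have hx0 : x ≠ 0 := ne_of_gt hx.1
    have hx1 : (1 : ℝ) - x ≠ 0 := sub_ne_zero.mpr (ne_of_gt hx.2)
    field_simp at h ⊢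
    linarith [h]
  have hfinal := tendsto_nhds_unique (hFlim.congr' heqF) hGlim
  have : deriv ψ 1 + θ * ν1 * deriv ψ 1 = -(σ * (1 - xt)) := by linarith [hfinal]
  linarith [this]
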